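/- Consider the Emax model with parameters θ = (θ₁, θ₂, θ₃), θ₂ > 0, θ₃ > 0, on the design region [L,U] with 0 < L < U, and let x_E* = (L(U+θ₃) + U(L+θ₃))/(L + U + 2θ₃). The design ξ* that puts weight 1/4 at L, weight 1/2 at x_E*, and weight 1/4 at U has invertible information matrix M_{ξ*}, and for every design ξ on [L,U] whose information matrix M_ξ is invertible, (M_{ξ*}^{−1})₃₃ ≤ (M_ξ^{−1})₃₃; that is, ξ* is e₃-optimal (c-optimal for the parameter θ₃, equivalently ED_p-optimal). -/

import Mathlib

structure Design (I : Set ℝ) where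
  pts : Finset ℝ
  w : ℝ → ℝ
  mem_pts : ∀ x ∈ pts, x ∈ I
  w_nonneg : ∀ x ∈ pts, 0 ≤ w x
  w_sum : ∑ x ∈ pts, w x = 1

noncomputable def infoMat {d : ℕ} (M : ℝ → Matrix (Fin d) (Fin d) ℝ) {I : Set ℝ}
    (ξ : Design I) : Matrix (Fin d) (Fin d) ℝ :=
  ∑ x ∈ ξ.pts, ξ.w x • M x

/-- Gradient vector of the Emax model. -/
noncomputable def fEmax (θ₂ θ₃ : ℝ) (x : ℝ) : Fin 3 → ℝ :=
  ![1, x / (x + θ₃), -θ₂ * x / (x + θ₃) ^ 2]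

/-- Single-observation information matrix of the Emax model. -/
noncomputable def emaxInfo (θ₂ θ₃ : ℝ) (x : ℝ) : Matrix (Fin 3) (Fin 3) ℝ :=
  Matrix.vecMulVec (fEmax θ₂ θ₃ x) (fEmax θ₂ θ₃ x)

/-! ### Auxiliary material for the proof -/

open Matrix

/-- The "Chebyshev" certificate vector for `e₃`-optimality in the Emax model. -/
noncomputable def zOpt (θ₂ θ₃ L U : ℝ) : Fin 3 → ℝ :=
  ![(2*(2*L*U+θ₃*(L+U))^2 - θ₃^2*(U-L)^2) / (θ₃^2*(U-L)^2),
    8*(θ₃^2 - L*U)*((L+θ₃)*(U+θ₃)) / (θ₃^2*(U-L)^2),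
    8*θ₃*((L+θ₃)*(U+θ₃))^2 / (θ₂*(θ₃^2*(U-L)^2))]

lemma fEmax_dot_zOpt (θ₂ θ₃ L U x : ℝ) (hθ₂ : θ₂ ≠ 0) (hθ₃ : θ₃ ≠ 0)
    (hUL : U - L ≠ 0) (hx : x + θ₃ ≠ 0) :
    fEmax θ₂ θ₃ x ⬝ᵥ zOpt θ₂ θ₃ L U =
      2*((L+U+2*θ₃)*x - (2*L*U+θ₃*(L+U)))^2 / ((x+θ₃)^2*(U-L)^2) - 1 := by
  simp [fEmax, zOpt, dotProduct, Fin.sum_univ_three]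
  field_simp
  ring

/-- The value of the gradient vector at the interior optimal-design point,
written without nested fractions. -/
lemma fEmax_at_xs (θ₂ θ₃ L U : ℝ) (hLθ : L+θ₃ ≠ 0) (hUθ : U+θ₃ ≠ 0)
    (hden : L+U+2*θ₃ ≠ 0) :
    fEmax θ₂ θ₃ ((L*(U+θ₃)+U*(L+θ₃))/(L+U+2*θ₃)) =
    ![1, (L*(U+θ₃)+U*(L+θ₃))/(2*((L+θ₃)*(U+θ₃))),
      -(θ₂*(L*(U+θ₃)+U*(L+θ₃))*(L+U+2*θ₃))/(4*((L+θ₃)*(U+θ₃))^2)] := by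
  have hplus : (L*(U+θ₃)+U*(L+θ₃))/(L+U+2*θ₃) + θ₃ = 2*((L+θ₃)*(U+θ₃))/(L+U+2*θ₃) := by
    rw [div_add' _ _ _ hden]; congr 1; ring
  funext i
  fin_cases i
  · rfl
  · show (L*(U+θ₃)+U*(L+θ₃))/(L+U+2*θ₃) / ((L*(U+θ₃)+U*(L+θ₃))/(L+U+2*θ₃) + θ₃) = _
    rw [hplus, div_div_div_cancel_right₀ hden]; simp
  · show -θ₂ * ((L*(U+θ₃)+U*(L+θ₃))/(L+U+2*θ₃)) / ((L*(U+θ₃)+U*(L+θ₃))/(L+U+2*θ₃) + θ₃)^2 = _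
    rw [hplus]; simp
    rw [div_pow, mul_div_assoc', neg_div, neg_div, div_div_eq_mul_div, div_mul_eq_mul_div, div_div]
    congr 1
    rw [div_eq_div_iff (mul_ne_zero hden (pow_ne_zero _ (mul_ne_zero two_ne_zero (mul_ne_zero hLθ hUθ)))) (mul_ne_zero four_ne_zero (pow_ne_zero _ (mul_ne_zero hLθ hUθ)))]
    ring

lemma vecMulVec_mulVec' (u v w : Fin 3 → ℝ) :
    Matrix.vecMulVec u v *ᵥ w = (v ⬝ᵥ w) • u := by
  funext i
  simp [Matrix.mulVec, Matrix.vecMulVec_apply, dotProduct, Fin.sum_univ_three]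
  ring

/-- The optimal design's information matrix maps the certificate vector to a
multiple of `e₃`. -/
lemma Mstar_mulVec (θ₂ θ₃ L U : ℝ) (hθ₂ : θ₂ ≠ 0) (hθ₃ : θ₃ ≠ 0) (hUL : U - L ≠ 0)
    (hLθ : L+θ₃ ≠ 0) (hUθ : U+θ₃ ≠ 0) (hden : L+U+2*θ₃ ≠ 0)
    (hxsθ : (L*(U+θ₃)+U*(L+θ₃))/(L+U+2*θ₃) + θ₃ ≠ 0) :
    ((1/4:ℝ) • emaxInfo θ₂ θ₃ L +
      (1/2:ℝ) • emaxInfo θ₂ θ₃ ((L*(U+θ₃)+U*(L+θ₃))/(L+U+2*θ₃)) +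
      (1/4:ℝ) • emaxInfo θ₂ θ₃ U) *ᵥ zOpt θ₂ θ₃ L U
    = ![0, 0, θ₂*(θ₃^2*(U-L)^2)/(8*θ₃*((L+θ₃)*(U+θ₃))^2)] := by
  have hdL : fEmax θ₂ θ₃ L ⬝ᵥ zOpt θ₂ θ₃ L U = 1 := by
    rw [fEmax_dot_zOpt θ₂ θ₃ L U L hθ₂ hθ₃ hUL hLθ]
    have h1 : (L+U+2*θ₃)*L - (2*L*U+θ₃*(L+U)) = -((U-L)*(L+θ₃)) := by ring
    rw [h1]; field_simp; ring
  have hdU : fEmax θ₂ θ₃ U ⬝ᵥ zOpt θ₂ θ₃ L U = 1 := by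
    rw [fEmax_dot_zOpt θ₂ θ₃ L U U hθ₂ hθ₃ hUL hUθ]
    have h1 : (L+U+2*θ₃)*U - (2*L*U+θ₃*(L+U)) = (U-L)*(U+θ₃) := by ring
    rw [h1]; field_simp; ring
  have hdM : fEmax θ₂ θ₃ ((L*(U+θ₃)+U*(L+θ₃))/(L+U+2*θ₃)) ⬝ᵥ zOpt θ₂ θ₃ L U = -1 := by
    rw [fEmax_dot_zOpt θ₂ θ₃ L U _ hθ₂ hθ₃ hUL hxsθ]
    have h1 : (L+U+2*θ₃)*((L*(U+θ₃)+U*(L+θ₃))/(L+U+2*θ₃)) - (2*L*U+θ₃*(L+U)) = 0 := by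
      field_simp
      ring
    rw [h1]
    norm_num
  rw [Matrix.add_mulVec, Matrix.add_mulVec]
  simp only [emaxInfo, Matrix.smul_mulVec, vecMulVec_mulVec', hdL, hdU, hdM]
  rw [fEmax_at_xs θ₂ θ₃ L U hLθ hUθ hden]
  funext i
  fin_cases i <;>
    simp [fEmax] <;> (field_simp; try ring)

set_option maxHeartbeats 1000000 in
/-- The determinant of the optimal design's information matrix. -/
lemma Mstar_det (θ₂ θ₃ L U : ℝ) (hθ₂ : θ₂ ≠ 0) (hθ₃ : θ₃ ≠ 0) (hUL : U - L ≠ 0)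
    (hLθ : L+θ₃ ≠ 0) (hUθ : U+θ₃ ≠ 0) (hden : L+U+2*θ₃ ≠ 0) :
    ((1/4:ℝ) • emaxInfo θ₂ θ₃ L +
      (1/2:ℝ) • emaxInfo θ₂ θ₃ ((L*(U+θ₃)+U*(L+θ₃))/(L+U+2*θ₃)) +
      (1/4:ℝ) • emaxInfo θ₂ θ₃ U).det
    = (θ₂*θ₃^2*(U-L)^3 / (4*(L+θ₃)^3*(U+θ₃)^3))^2 / 32 := by
  have hfact : ((1/4:ℝ) • emaxInfo θ₂ θ₃ L +
      (1/2:ℝ) • emaxInfo θ₂ θ₃ ((L*(U+θ₃)+U*(L+θ₃))/(L+U+2*θ₃)) +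
      (1/4:ℝ) • emaxInfo θ₂ θ₃ U)
      = (Matrix.of ![fEmax θ₂ θ₃ L, fEmax θ₂ θ₃ ((L*(U+θ₃)+U*(L+θ₃))/(L+U+2*θ₃)),
          fEmax θ₂ θ₃ U])ᵀ *
        (Matrix.diagonal ![(1/4:ℝ), 1/2, 1/4] *
          Matrix.of ![fEmax θ₂ θ₃ L, fEmax θ₂ θ₃ ((L*(U+θ₃)+U*(L+θ₃))/(L+U+2*θ₃)),
            fEmax θ₂ θ₃ U]) := by
    ext i j
    fin_cases i <;> fin_cases j <;>
      simp [Matrix.mul_apply, Fin.sum_univ_three, emaxInfo,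
        Matrix.vecMulVec_apply, Matrix.diagonal, Matrix.of_apply, Matrix.transpose_apply,
        Matrix.vecHead, Matrix.vecTail, Function.comp] <;> ring
  have hdetG : (Matrix.of ![fEmax θ₂ θ₃ L, fEmax θ₂ θ₃ ((L*(U+θ₃)+U*(L+θ₃))/(L+U+2*θ₃)),
        fEmax θ₂ θ₃ U]).det = θ₂*θ₃^2*(U-L)^3 / (4*(L+θ₃)^3*(U+θ₃)^3) := by
    rw [show (Matrix.of ![fEmax θ₂ θ₃ L, fEmax θ₂ θ₃ ((L*(U+θ₃)+U*(L+θ₃))/(L+U+2*θ₃)),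
        fEmax θ₂ θ₃ U]) = Matrix.of ![fEmax θ₂ θ₃ L,
          ![1, (L*(U+θ₃)+U*(L+θ₃))/(2*((L+θ₃)*(U+θ₃))),
            -(θ₂*(L*(U+θ₃)+U*(L+θ₃))*(L+U+2*θ₃))/(4*((L+θ₃)*(U+θ₃))^2)],
          fEmax θ₂ θ₃ U] from by rw [fEmax_at_xs θ₂ θ₃ L U hLθ hUθ hden]]
    rw [Matrix.det_fin_three]
    simp only [Matrix.of_apply, Matrix.cons_val', Matrix.cons_val_zero, Matrix.cons_val_one,
      Matrix.head_cons, Matrix.empty_val', Matrix.cons_val_fin_one, Matrix.head_fin_const,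
      Matrix.cons_val_two, Matrix.tail_cons, fEmax]
    field_simp
    ring
  rw [hfact, Matrix.det_mul, Matrix.det_mul, Matrix.det_transpose, Matrix.det_diagonal,
    Fin.prod_univ_three, hdetG]
  norm_num
  rw [show (![1 / 4, 1 / 2, 1 / 4] : Fin 3 → ℝ) 2 = 1 / 4 from rfl]
  ring

/-- The squared certificate polynomial is bounded by one on the design interval. -/
lemma fEmax_dot_zOpt_sq_le (θ₂ θ₃ L U x : ℝ) (hθ₂ : 0 < θ₂) (hθ₃ : 0 < θ₃)
    (hL : 0 < L) (hLU : L < U) (hx1 : L ≤ x) (hx2 : x ≤ U) :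
    (fEmax θ₂ θ₃ x ⬝ᵥ zOpt θ₂ θ₃ L U) * (fEmax θ₂ θ₃ x ⬝ᵥ zOpt θ₂ θ₃ L U) ≤ 1 := by
  have hxθ : (0:ℝ) < x + θ₃ := by linarith
  rw [fEmax_dot_zOpt θ₂ θ₃ L U x (ne_of_gt hθ₂) (ne_of_gt hθ₃) (by nlinarith) (ne_of_gt hxθ)]
  have h1 : (0:ℝ) ≤ (L+θ₃)*(U-x) := by
    apply mul_nonneg <;> linarith
  have h2 : (0:ℝ) ≤ (U+θ₃)*(x-L) := by
    apply mul_nonneg <;> linarith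
  have hkey : ((L+U+2*θ₃)*x - (2*L*U+θ₃*(L+U)))^2 ≤ ((U-L)*(x+θ₃))^2 := by
    nlinarith [mul_nonneg h1 h2]
  have hd : (0:ℝ) < (x+θ₃)^2*(U-L)^2 := by
    have : (0:ℝ) < U - L := by linarith
    positivity
  have h5 : ((L+U+2*θ₃)*x - (2*L*U+θ₃*(L+U)))^2 / ((x+θ₃)^2*(U-L)^2) ≤ 1 := by
    rw [div_le_one hd]
    nlinarith [hkey]
  have h6 : 0 ≤ ((L+U+2*θ₃)*x - (2*L*U+θ₃*(L+U)))^2 / ((x+θ₃)^2*(U-L)^2) := by positivity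
  have hgoal : 2*((L+U+2*θ₃)*x - (2*L*U+θ₃*(L+U)))^2 / ((x+θ₃)^2*(U-L)^2)
      = 2*(((L+U+2*θ₃)*x - (2*L*U+θ₃*(L+U)))^2 / ((x+θ₃)^2*(U-L)^2)) := by
    rw [mul_div_assoc]
  rw [hgoal]
  set r := ((L+U+2*θ₃)*x - (2*L*U+θ₃*(L+U)))^2 / ((x+θ₃)^2*(U-L)^2)
  nlinarith [h5, h6, mul_nonneg h6 (sub_nonneg.mpr h5)]

lemma dot_emax (θ₂ θ₃ x : ℝ) (u v : Fin 3 → ℝ) :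
    u ⬝ᵥ (emaxInfo θ₂ θ₃ x *ᵥ v) = (fEmax θ₂ θ₃ x ⬝ᵥ u) * (fEmax θ₂ θ₃ x ⬝ᵥ v) := by
  simp [emaxInfo, Matrix.mulVec, dotProduct, Matrix.vecMulVec_apply, Fin.sum_univ_three]
  ring

lemma sum_bilin (θ₂ θ₃ : ℝ) (s : Finset ℝ) (w : ℝ → ℝ) (u v : Fin 3 → ℝ) :
    u ⬝ᵥ ((∑ x ∈ s, w x • emaxInfo θ₂ θ₃ x) *ᵥ v) =
      ∑ x ∈ s, w x * ((fEmax θ₂ θ₃ x ⬝ᵥ u) * (fEmax θ₂ θ₃ x ⬝ᵥ v)) := by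
  classical
  induction s using Finset.induction_on with
  | empty => simp [Matrix.zero_mulVec]
  | insert _ _ ha ih =>
      rw [Finset.sum_insert ha, Finset.sum_insert ha, Matrix.add_mulVec,
        dotProduct_add, ih, Matrix.smul_mulVec, dotProduct_smul,
        smul_eq_mul, dot_emax]

/-- Bilinear form of a design information matrix as a weighted sum. -/
lemma design_bilin {I : Set ℝ} (θ₂ θ₃ : ℝ) (ξ : Design I) (u v : Fin 3 → ℝ) :
    u ⬝ᵥ (infoMat (emaxInfo θ₂ θ₃) ξ *ᵥ v) =
      ∑ x ∈ ξ.pts, ξ.w x * ((fEmax θ₂ θ₃ x ⬝ᵥ u) * (fEmax θ₂ θ₃ x ⬝ᵥ v)) :=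
  sum_bilin θ₂ θ₃ ξ.pts ξ.w u v

/-- the design with weights (1/4, 1/2, 1/4) at `L`, `x_E*`, `U` is
e₃-optimal (c-optimal for θ₃) for the Emax model. -/
theorem stmt11 (θ₁ θ₂ θ₃ : ℝ) (hθ₂ : 0 < θ₂) (hθ₃ : 0 < θ₃) (L U : ℝ)
    (hL : 0 < L) (hLU : L < U) :
    IsUnit ((1 / 4 : ℝ) • emaxInfo θ₂ θ₃ L +
        (1 / 2 : ℝ) • emaxInfo θ₂ θ₃ ((L * (U + θ₃) + U * (L + θ₃)) / (L + U + 2 * θ₃)) +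
        (1 / 4 : ℝ) • emaxInfo θ₂ θ₃ U).det ∧
    ∀ ξ : Design (Set.Icc L U), IsUnit (infoMat (emaxInfo θ₂ θ₃) ξ).det →
      ((1 / 4 : ℝ) • emaxInfo θ₂ θ₃ L +
        (1 / 2 : ℝ) • emaxInfo θ₂ θ₃ ((L * (U + θ₃) + U * (L + θ₃)) / (L + U + 2 * θ₃)) +
        (1 / 4 : ℝ) • emaxInfo θ₂ θ₃ U)⁻¹ 2 2 ≤
      (infoMat (emaxInfo θ₂ θ₃) ξ)⁻¹ 2 2 := by
  have hULpos : (0:ℝ) < U - L := by linarith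
  have hLθ : (0:ℝ) < L + θ₃ := by linarith
  have hUθ : (0:ℝ) < U + θ₃ := by linarith
  have hden : (0:ℝ) < L + U + 2*θ₃ := by linarith
  have hxsθ : (0:ℝ) < (L*(U+θ₃)+U*(L+θ₃))/(L+U+2*θ₃) + θ₃ := by
    have h1 : (0:ℝ) < L*(U+θ₃)+U*(L+θ₃) := by nlinarith
    have h2 : (0:ℝ) < (L*(U+θ₃)+U*(L+θ₃))/(L+U+2*θ₃) := div_pos h1 hden
    linarith
  have hdet := Mstar_det θ₂ θ₃ L U (ne_of_gt hθ₂) (ne_of_gt hθ₃) (ne_of_gt hULpos)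
    (ne_of_gt hLθ) (ne_of_gt hUθ) (ne_of_gt hden)
  have hGpos : (0:ℝ) < θ₂*θ₃^2*(U-L)^3 / (4*(L+θ₃)^3*(U+θ₃)^3) := by
    apply div_pos
    · exact mul_pos (mul_pos hθ₂ (pow_pos hθ₃ 2)) (pow_pos hULpos 3)
    · positivity
  have hdetpos : (0:ℝ) < ((1 / 4 : ℝ) • emaxInfo θ₂ θ₃ L +
        (1 / 2 : ℝ) • emaxInfo θ₂ θ₃ ((L * (U + θ₃) + U * (L + θ₃)) / (L + U + 2 * θ₃)) +
        (1 / 4 : ℝ) • emaxInfo θ₂ θ₃ U).det := by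
    rw [hdet]
    exact div_pos (pow_pos hGpos 2) (by norm_num)
  have hunit : IsUnit ((1 / 4 : ℝ) • emaxInfo θ₂ θ₃ L +
        (1 / 2 : ℝ) • emaxInfo θ₂ θ₃ ((L * (U + θ₃) + U * (L + θ₃)) / (L + U + 2 * θ₃)) +
        (1 / 4 : ℝ) • emaxInfo θ₂ θ₃ U).det := isUnit_iff_ne_zero.mpr (ne_of_gt hdetpos)
  refine ⟨hunit, ?_⟩
  intro ξ hMdet
  -- Value of the optimality criterion at the optimal design
  have hMz := Mstar_mulVec θ₂ θ₃ L U (ne_of_gt hθ₂) (ne_of_gt hθ₃) (ne_of_gt hULpos)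
    (ne_of_gt hLθ) (ne_of_gt hUθ) (ne_of_gt hden) (ne_of_gt hxsθ)
  have hinv : ((1 / 4 : ℝ) • emaxInfo θ₂ θ₃ L +
        (1 / 2 : ℝ) • emaxInfo θ₂ θ₃ ((L * (U + θ₃) + U * (L + θ₃)) / (L + U + 2 * θ₃)) +
        (1 / 4 : ℝ) • emaxInfo θ₂ θ₃ U)⁻¹ *ᵥ
      (((1 / 4 : ℝ) • emaxInfo θ₂ θ₃ L +
        (1 / 2 : ℝ) • emaxInfo θ₂ θ₃ ((L * (U + θ₃) + U * (L + θ₃)) / (L + U + 2 * θ₃)) +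
        (1 / 4 : ℝ) • emaxInfo θ₂ θ₃ U) *ᵥ zOpt θ₂ θ₃ L U) = zOpt θ₂ θ₃ L U := by
    rw [Matrix.mulVec_mulVec, Matrix.nonsing_inv_mul _ hunit, Matrix.one_mulVec]
  rw [hMz] at hinv
  have h22 : ((1 / 4 : ℝ) • emaxInfo θ₂ θ₃ L +
        (1 / 2 : ℝ) • emaxInfo θ₂ θ₃ ((L * (U + θ₃) + U * (L + θ₃)) / (L + U + 2 * θ₃)) +
        (1 / 4 : ℝ) • emaxInfo θ₂ θ₃ U)⁻¹ 2 2 *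
      (θ₂*(θ₃^2*(U-L)^2)/(8*θ₃*((L+θ₃)*(U+θ₃))^2)) = zOpt θ₂ θ₃ L U 2 := by
    have h := congrFun hinv 2
    simpa [Matrix.mulVec, dotProduct, Fin.sum_univ_three] using h
  have hzc : zOpt θ₂ θ₃ L U 2 * (θ₂*(θ₃^2*(U-L)^2)/(8*θ₃*((L+θ₃)*(U+θ₃))^2)) = 1 := by
    simp only [zOpt]
    show 8*θ₃*((L+θ₃)*(U+θ₃))^2 / (θ₂*(θ₃^2*(U-L)^2)) * _ = 1
    field_simp
  have hM22 : ((1 / 4 : ℝ) • emaxInfo θ₂ θ₃ L +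
        (1 / 2 : ℝ) • emaxInfo θ₂ θ₃ ((L * (U + θ₃) + U * (L + θ₃)) / (L + U + 2 * θ₃)) +
        (1 / 4 : ℝ) • emaxInfo θ₂ θ₃ U)⁻¹ 2 2 = (zOpt θ₂ θ₃ L U 2)^2 := by
    linear_combination (zOpt θ₂ θ₃ L U 2) * h22 - ((1 / 4 : ℝ) • emaxInfo θ₂ θ₃ L +
        (1 / 2 : ℝ) • emaxInfo θ₂ θ₃ ((L * (U + θ₃) + U * (L + θ₃)) / (L + U + 2 * θ₃)) +
        (1 / 4 : ℝ) • emaxInfo θ₂ θ₃ U)⁻¹ 2 2 * hzc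
  rw [hM22]
  -- Cauchy–Schwarz lower bound for an arbitrary design
  set M := infoMat (emaxInfo θ₂ θ₃) ξ with hMdef
  set z := zOpt θ₂ θ₃ L U with hzdef
  set y := M⁻¹ *ᵥ ![(0:ℝ),0,1] with hydef
  have hMy : M *ᵥ y = ![(0:ℝ),0,1] := by
    rw [hydef, Matrix.mulVec_mulVec, Matrix.mul_nonsing_inv _ hMdet, Matrix.one_mulVec]
  have hCval : y ⬝ᵥ (M *ᵥ y) = M⁻¹ 2 2 := by
    rw [hMy, hydef]
    simp [dotProduct, Matrix.mulVec, Fin.sum_univ_three]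
  have hBval : z ⬝ᵥ (M *ᵥ y) = z 2 := by
    rw [hMy]
    simp [dotProduct, Fin.sum_univ_three]
  have hq0 : ∀ v : Fin 3 → ℝ, 0 ≤ v ⬝ᵥ (M *ᵥ v) := by
    intro v
    rw [hMdef, design_bilin]
    exact Finset.sum_nonneg fun x hx =>
      mul_nonneg (ξ.w_nonneg x hx) (mul_self_nonneg _)
  have hsym : y ⬝ᵥ (M *ᵥ z) = z ⬝ᵥ (M *ᵥ y) := by
    rw [hMdef, design_bilin, design_bilin]
    exact Finset.sum_congr rfl fun x _ => by ring
  have hA1 : z ⬝ᵥ (M *ᵥ z) ≤ 1 := by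
    rw [hMdef, design_bilin]
    calc ∑ x ∈ ξ.pts, ξ.w x * ((fEmax θ₂ θ₃ x ⬝ᵥ z) * (fEmax θ₂ θ₃ x ⬝ᵥ z))
        ≤ ∑ x ∈ ξ.pts, ξ.w x := by
          apply Finset.sum_le_sum
          intro x hx
          obtain ⟨hx1, hx2⟩ := ξ.mem_pts x hx
          have hb := fEmax_dot_zOpt_sq_le θ₂ θ₃ L U x hθ₂ hθ₃ hL hLU hx1 hx2
          exact mul_le_of_le_one_right (ξ.w_nonneg x hx) (by rw [hzdef]; exact hb)
      _ = 1 := ξ.w_sum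
  have hq : ∀ lam : ℝ, 0 ≤ (z ⬝ᵥ (M *ᵥ z)) * (lam*lam) + (-(2 * z 2))*lam + M⁻¹ 2 2 := by
    intro lam
    have h0 := hq0 (lam • z - y)
    have hexp : (lam • z - y) ⬝ᵥ (M *ᵥ (lam • z - y)) =
        (z ⬝ᵥ (M *ᵥ z)) * (lam*lam) + (-(2 * z 2))*lam + M⁻¹ 2 2 := by
      simp only [Matrix.mulVec_sub, Matrix.mulVec_smul, sub_dotProduct,
        dotProduct_sub, smul_dotProduct, dotProduct_smul, smul_eq_mul]
      rw [hsym, hBval, hCval]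
      ring
    rw [hexp] at h0
    exact h0
  have hdisc := discrim_le_zero hq
  rw [discrim] at hdisc
  have hC0 : 0 ≤ M⁻¹ 2 2 := hCval ▸ hq0 y
  have hApos : 0 ≤ z ⬝ᵥ (M *ᵥ z) := hq0 z
  nlinarith [hdisc, hA1, hC0, hApos]
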